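/- Fix t > 0 with t ≠ 2 and x ∈ ℝ. Then as n → ∞, n · (d/dx) Φ((c_n x + d_n)^{1/t}) = e^{−x} ( 1 + x b_n^{−2} (1 − t + ((t−2)/2) x) + x² b_n^{−4} ( (1−t)(1−2t)/2 + (5(1−t)(t−2)/6) x + ((t−2)²/8) x² ) + O(b_n^{−6}) ), where the derivative in x equals t^{−1} n c_n (c_n x + d_n)^{1/t − 1} φ((c_n x + d_n)^{1/t}) and is defined for n large enough that c_n x + d_n > 0. -/

import Mathlib

open Real Filter Topology MeasureTheory

/-- The standard normal distribution function. -/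
noncomputable def stdNormalCDF (x : ℝ) : ℝ :=
  ∫ u in Set.Iic x, Real.exp (-u ^ 2 / 2) / Real.sqrt (2 * Real.pi)

/-- The standard normal density. -/
noncomputable def stdNormalPDF (x : ℝ) : ℝ :=
  Real.exp (-x ^ 2 / 2) / Real.sqrt (2 * Real.pi)

private lemma mvt_step {ρ B : ℝ} (hB : 0 ≤ B) (k : ℕ) (f f' : ℝ → ℝ) (h0 : f 0 = 0)
    (hd : ∀ s : ℝ, |s| ≤ ρ → HasDerivAt f (f' s) s)
    (hbd : ∀ s : ℝ, |s| ≤ ρ → |f' s| ≤ B * |s| ^ k) :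
    ∀ v : ℝ, |v| ≤ ρ → |f v| ≤ B * |v| ^ (k + 1) := by
  intro v hv
  have habs : ∀ s ∈ Set.Icc (min 0 v) (max 0 v), |s| ≤ |v| := by
    intro s hs
    rcases hs with ⟨h1, h2⟩
    rw [abs_le]
    constructor
    · calc -|v| ≤ min 0 v := by rcases le_total 0 v with h | h <;> simp [min_eq_left, min_eq_right, h, abs_of_nonneg, abs_of_nonpos] <;> linarith [abs_nonneg v]
      _ ≤ s := h1
    · calc s ≤ max 0 v := h2
        _ ≤ |v| := by rcases le_total 0 v with h | h <;> simp [max_eq_left, max_eq_right, h, abs_of_nonneg, abs_of_nonpos] <;> linarith [abs_nonneg v]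
  have key := Convex.norm_image_sub_le_of_norm_hasDerivWithin_le
    (f := f) (f' := f') (s := Set.Icc (min 0 v) (max 0 v)) (C := B * |v| ^ k)
    (fun s hs => ((hd s (le_trans (habs s hs) hv)).hasDerivWithinAt))
    (fun s hs => by
      have := hbd s (le_trans (habs s hs) hv)
      calc ‖f' s‖ = |f' s| := rfl
        _ ≤ B * |s| ^ k := this
        _ ≤ B * |v| ^ k := by
            apply mul_le_mul_of_nonneg_left _ hB
            exact pow_le_pow_left₀ (abs_nonneg _) (habs s hs) k)
    (convex_Icc _ _)
    (Set.mem_Icc.2 ⟨min_le_left _ _, le_max_left _ _⟩)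
    (Set.mem_Icc.2 ⟨min_le_right _ _, le_max_right _ _⟩)
  have : ‖f v - f 0‖ ≤ B * |v| ^ k * ‖v - 0‖ := key
  rw [h0, sub_zero, sub_zero] at this
  calc |f v| = ‖f v‖ := rfl
    _ ≤ B * |v| ^ k * ‖v‖ := this
    _ = B * |v| ^ (k + 1) := by rw [Real.norm_eq_abs]; ring

private lemma one_add_pos {v : ℝ} (hv : |v| ≤ 1/2) : (0:ℝ) < 1 + v := by
  rcases abs_le.1 hv with ⟨h1, _⟩; linarith

private lemma hasDerivAt_one_add_rpow (r : ℝ) {v : ℝ} (hv : |v| ≤ 1/2) :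
    HasDerivAt (fun w : ℝ => (1 + w) ^ r) (r * (1 + v) ^ (r - 1)) v := by
  have h1 : (0:ℝ) < 1 + v := one_add_pos hv
  have inner : HasDerivAt (fun w : ℝ => 1 + w) 1 v := (hasDerivAt_id v).const_add 1
  have outer := Real.hasDerivAt_rpow_const (x := 1 + v) (p := r) (Or.inl (ne_of_gt h1))
  have := outer.comp v inner
  rw [mul_one] at this
  exact this

private lemma rpow_base_bound (r : ℝ) {v : ℝ} (hv : |v| ≤ 1/2) :
    (1 + v) ^ r ≤ 2 ^ |r| := by
  rcases abs_le.1 hv with ⟨h1, h2⟩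
  rcases le_or_gt 0 r with hr | hr
  · rw [abs_of_nonneg hr]
    exact Real.rpow_le_rpow (by linarith) (by linarith) hr
  · rw [abs_of_neg hr]
    calc (1 + v) ^ r ≤ ((1:ℝ)/2) ^ r :=
          Real.rpow_le_rpow_of_nonpos (by norm_num) (by linarith) hr.le
      _ = 2 ^ (-r) := by
          rw [one_div, ← Real.rpow_neg_one 2, ← Real.rpow_mul (by norm_num)]
          ring_nf

private lemma rpow_taylor3 (r : ℝ) : ∃ K : ℝ, 0 ≤ K ∧ ∀ v : ℝ, |v| ≤ 1/2 →
    |(1+v)^r - 1 - r*v - r*(r-1)/2*v^2 - r*(r-1)*(r-2)/6*v^3| ≤ K * |v|^4 := by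
  set B₀ : ℝ := |r-3| * 2 ^ |r-3-1| with hB₀
  have hB₀nn : 0 ≤ B₀ := by positivity
  -- level 0
  have h0 : ∀ v : ℝ, |v| ≤ 1/2 → |(1+v)^(r-3) - 1| ≤ B₀ * |v| ^ 1 := by
    apply mvt_step hB₀nn 0 _ (fun s => (r-3) * (1+s)^(r-3-1))
    · simp
    · intro s hs
      exact (hasDerivAt_one_add_rpow (r-3) hs).sub_const 1
    · intro s hs
      rw [abs_mul, pow_zero, mul_one]
      have h1 : (0:ℝ) < 1 + s := one_add_pos hs
      have := rpow_base_bound (r-3-1) hs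
      have habs : |(1+s)^(r-3-1)| = (1+s)^(r-3-1) := abs_of_nonneg (Real.rpow_nonneg h1.le _)
      rw [habs]
      exact mul_le_mul_of_nonneg_left this (abs_nonneg _)
  -- level 1
  have h1 : ∀ v : ℝ, |v| ≤ 1/2 →
      |(1+v)^(r-2) - 1 - (r-2)*v| ≤ |r-2| * B₀ * |v| ^ 2 := by
    apply mvt_step (by positivity) 1 _ (fun s => (r-2) * ((1+s)^(r-3) - 1))
    · simp
    · intro s hs
      have hd := ((hasDerivAt_one_add_rpow (r-2) hs).sub_const 1).sub
        ((hasDerivAt_id s).const_mul (r-2))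
      refine hd.congr_deriv ?_
      rw [show r-2-1 = r-3 by ring]
      ring
    · intro s hs
      rw [abs_mul, pow_one]
      calc |r-2| * |(1+s)^(r-3) - 1| ≤ |r-2| * (B₀ * |s| ^ 1) :=
            mul_le_mul_of_nonneg_left (h0 s hs) (abs_nonneg _)
        _ = |r-2| * B₀ * |s| := by ring
  -- level 2
  have h2 : ∀ v : ℝ, |v| ≤ 1/2 →
      |(1+v)^(r-1) - 1 - (r-1)*v - (r-1)*(r-2)/2*v^2| ≤ |r-1| * (|r-2| * B₀) * |v| ^ 3 := by
    apply mvt_step (by positivity) 2 _ (fun s => (r-1) * ((1+s)^(r-2) - 1 - (r-2)*s))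
    · simp
    · intro s hs
      have hd := (((hasDerivAt_one_add_rpow (r-1) hs).sub_const 1).sub
        ((hasDerivAt_id s).const_mul (r-1))).sub
        (((hasDerivAt_pow 2 s)).const_mul ((r-1)*(r-2)/2))
      refine hd.congr_deriv ?_
      rw [show r-1-1 = r-2 by ring]
      ring
    · intro s hs
      rw [abs_mul]
      calc |r-1| * |(1+s)^(r-2) - 1 - (r-2)*s| ≤ |r-1| * (|r-2| * B₀ * |s| ^ 2) :=
            mul_le_mul_of_nonneg_left (h1 s hs) (abs_nonneg _)
        _ = |r-1| * (|r-2| * B₀) * |s| ^ 2 := by ring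
  -- level 3
  refine ⟨|r| * (|r-1| * (|r-2| * B₀)), by positivity, ?_⟩
  apply mvt_step (by positivity) 3 _ (fun s => r * ((1+s)^(r-1) - 1 - (r-1)*s - (r-1)*(r-2)/2*s^2))
  · simp
  · intro s hs
    have hd := ((((hasDerivAt_one_add_rpow r hs).sub_const 1).sub
      ((hasDerivAt_id s).const_mul r)).sub
      (((hasDerivAt_pow 2 s)).const_mul (r*(r-1)/2))).sub
      (((hasDerivAt_pow 3 s)).const_mul (r*(r-1)*(r-2)/6))
    refine hd.congr_deriv ?_
    ring
  · intro s hs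
    rw [abs_mul]
    calc |r| * |(1+s)^(r-1) - 1 - (r-1)*s - (r-1)*(r-2)/2*s^2|
        ≤ |r| * (|r-1| * (|r-2| * B₀) * |s| ^ 3) :=
          mul_le_mul_of_nonneg_left (h2 s hs) (abs_nonneg _)
      _ = |r| * (|r-1| * (|r-2| * B₀)) * |s| ^ 3 := by ring

private lemma exp_taylor2 : ∀ w : ℝ, |w| ≤ 1 →
    |Real.exp w - 1 - w - w^2/2| ≤ 3 * |w|^3 := by
  have hexp : ∀ s : ℝ, |s| ≤ 1 → Real.exp s ≤ 3 := by
    intro s hs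
    rcases abs_le.1 hs with ⟨_, h2⟩
    calc Real.exp s ≤ Real.exp 1 := Real.exp_le_exp.2 h2
      _ ≤ 3 := by linarith [Real.exp_one_lt_d9.le]
  have h0 : ∀ v : ℝ, |v| ≤ 1 → |Real.exp v - 1| ≤ 3 * |v| ^ 1 := by
    apply mvt_step (by norm_num) 0 _ (fun s => Real.exp s)
    · simp
    · intro s _; exact (Real.hasDerivAt_exp s).sub_const 1
    · intro s hs
      rw [pow_zero, mul_one, abs_of_nonneg (Real.exp_pos s).le]
      exact hexp s hs
  have h1 : ∀ v : ℝ, |v| ≤ 1 → |Real.exp v - 1 - v| ≤ 3 * |v| ^ 2 := by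
    apply mvt_step (by norm_num) 1 _ (fun s => Real.exp s - 1)
    · simp
    · intro s _; exact ((Real.hasDerivAt_exp s).sub_const 1).sub (hasDerivAt_id s)
    · intro s hs; simpa using h0 s hs
  apply mvt_step (B := 3) (by norm_num) 2 _ (fun s => Real.exp s - 1 - s)
  · simp
  · intro s _
    have hd := (((Real.hasDerivAt_exp s).sub_const 1).sub (hasDerivAt_id s)).sub
      ((hasDerivAt_pow 2 s).const_mul (1/2 : ℝ))
    have hfun : (fun v : ℝ => Real.exp v - 1 - v - v^2/2)
        = fun v : ℝ => Real.exp v - 1 - id v - 1/2 * v^2 := by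
      funext v; simp only [id]; ring
    rw [hfun]
    refine hd.congr_deriv ?_
    push_cast
    ring
  · intro s hs; exact h1 s hs

private lemma integrable_gauss : Integrable (fun u : ℝ => Real.exp (-u ^ 2 / 2) / Real.sqrt (2 * Real.pi)) := by
  have h : Integrable (fun u : ℝ => Real.exp (-(1/2) * u ^ 2)) := integrable_exp_neg_mul_sq (by norm_num)
  have h2 := h.div_const (Real.sqrt (2 * Real.pi))
  convert h2 using 2 with u
  ring_nf

private lemma hasDerivAt_stdNormalCDF (a : ℝ) : HasDerivAt stdNormalCDF (stdNormalPDF a) a := by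
  have hcont : Continuous (fun u : ℝ => Real.exp (-u ^ 2 / 2) / Real.sqrt (2 * Real.pi)) := by
    continuity
  have heq : stdNormalCDF = fun y => stdNormalCDF 0 + ∫ u in (0:ℝ)..y, Real.exp (-u ^ 2 / 2) / Real.sqrt (2 * Real.pi) := by
    funext y
    have := intervalIntegral.integral_Iic_sub_Iic (μ := volume)
      (f := fun u : ℝ => Real.exp (-u ^ 2 / 2) / Real.sqrt (2 * Real.pi))
      (integrable_gauss.integrableOn) (integrable_gauss.integrableOn) (a := 0) (b := y)
    simp only [stdNormalCDF]
    linarith [this]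
  rw [heq]
  exact ((hcont.integral_hasStrictDerivAt 0 a).hasDerivAt.const_add _)

private lemma b_tendsto (b : ℕ → ℝ)
    (hb : ∀ n : ℕ, 1 ≤ n → 0 < b n ∧
      2 * Real.pi * (b n) ^ 2 * Real.exp ((b n) ^ 2) = (n : ℝ) ^ 2)
    (M : ℝ) (hM : 0 < M) : ∃ N : ℕ, 1 ≤ N ∧ ∀ n : ℕ, N ≤ n → M ≤ b n := by
  set s : ℝ := Real.sqrt (2 * Real.pi * M ^ 2 * Real.exp (M ^ 2)) with hs
  refine ⟨⌈s⌉₊ + 1, by omega, ?_⟩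
  intro n hn
  have hn1 : 1 ≤ n := by omega
  obtain ⟨hbpos, hbeq⟩ := hb n hn1
  by_contra hlt
  push_neg at hlt
  have hns : s < (n : ℝ) := by
    have h1 : s ≤ (⌈s⌉₊ : ℝ) := Nat.le_ceil s
    have h2 : ((⌈s⌉₊ + 1 : ℕ) : ℝ) ≤ (n : ℝ) := by exact_mod_cast hn
    push_cast at h2
    linarith
  have hsnn : 0 ≤ s := Real.sqrt_nonneg _
  have hs2 : s ^ 2 = 2 * Real.pi * M ^ 2 * Real.exp (M ^ 2) := by
    rw [hs, Real.sq_sqrt]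
    positivity
  have hmono : 2 * Real.pi * (b n) ^ 2 * Real.exp ((b n) ^ 2) < 2 * Real.pi * M ^ 2 * Real.exp (M ^ 2) := by
    have hb2 : (b n) ^ 2 < M ^ 2 := by nlinarith
    have he : Real.exp ((b n) ^ 2) < Real.exp (M ^ 2) := Real.exp_lt_exp.2 hb2
    have hpi := Real.pi_pos
    have key1 : 0 < 2 * Real.pi * (M ^ 2 - (b n) ^ 2) * Real.exp ((b n) ^ 2) :=
      mul_pos (mul_pos (by positivity) (sub_pos.2 hb2)) (Real.exp_pos _)
    have key2 : 0 < 2 * Real.pi * M ^ 2 * (Real.exp (M ^ 2) - Real.exp ((b n) ^ 2)) :=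
      mul_pos (by positivity) (sub_pos.2 he)
    nlinarith [key1, key2]
  have : (n : ℝ) ^ 2 < s ^ 2 := by rw [hs2]; linarith [hbeq ▸ hmono]
  nlinarith

private lemma polyTail (k0 k1 k2 k3 ε : ℝ) (hε : 0 ≤ ε) (hε1 : ε ≤ 1) :
    |k0 + ε*(k1 + ε*(k2 + ε*k3))| ≤ |k0| + |k1| + |k2| + |k3| := by
  have h3 : |k2 + ε*k3| ≤ |k2| + |k3| := by
    calc |k2 + ε*k3| ≤ |k2| + |ε*k3| := abs_add_le _ _
      _ = |k2| + ε*|k3| := by rw [abs_mul, abs_of_nonneg hε]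
      _ ≤ |k2| + 1*|k3| := by
          have := abs_nonneg k3
          gcongr
      _ = |k2| + |k3| := by ring
  have h2 : |k1 + ε*(k2 + ε*k3)| ≤ |k1| + |k2| + |k3| := by
    calc |k1 + ε*(k2 + ε*k3)| ≤ |k1| + |ε*(k2 + ε*k3)| := abs_add_le _ _
      _ = |k1| + ε*|k2 + ε*k3| := by rw [abs_mul, abs_of_nonneg hε]
      _ ≤ |k1| + 1*(|k2| + |k3|) := by
          have := abs_nonneg (k2 + ε*k3)
          gcongr
      _ = |k1| + |k2| + |k3| := by ring
  calc |k0 + ε*(k1 + ε*(k2 + ε*k3))| ≤ |k0| + |ε*(k1 + ε*(k2 + ε*k3))| := abs_add_le _ _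
    _ = |k0| + ε*|k1 + ε*(k2 + ε*k3)| := by rw [abs_mul, abs_of_nonneg hε]
    _ ≤ |k0| + 1*(|k1| + |k2| + |k3|) := by
        have := abs_nonneg (k1 + ε*(k2 + ε*k3))
        gcongr
    _ = |k0| + |k1| + |k2| + |k3| := by ring

private lemma combine (Q Q₀ X X₀ T KQ MQ0 KX MP ε : ℝ)
    (h1 : |Q - Q₀| ≤ KQ * ε^3) (h2 : |X| ≤ 3) (h3 : |Q₀| ≤ MQ0) (h4 : |X - X₀| ≤ KX * ε^3)
    (h5 : |Q₀*X₀ - T| ≤ MP * ε^3) :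
    |Q*X - T| ≤ (3*KQ + MQ0*KX + MP) * ε^3 := by
  have hrw : Q*X - T = (Q-Q₀)*X + Q₀*(X-X₀) + (Q₀*X₀ - T) := by ring
  rw [hrw]
  calc |(Q-Q₀)*X + Q₀*(X-X₀) + (Q₀*X₀ - T)|
      ≤ |(Q-Q₀)*X| + |Q₀*(X-X₀)| + |Q₀*X₀ - T| := abs_add_three _ _ _
    _ ≤ (KQ*ε^3)*3 + MQ0*(KX*ε^3) + MP*ε^3 := by
        refine add_le_add (add_le_add ?_ ?_) h5
        · rw [abs_mul]
          exact mul_le_mul h1 h2 (abs_nonneg _) (le_trans (abs_nonneg _) h1)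
        · rw [abs_mul]
          exact mul_le_mul h3 h4 (abs_nonneg _) (le_trans (abs_nonneg _) h3)
    _ = (3*KQ + MQ0*KX + MP) * ε^3 := by ring

private lemma expPart (W W₀ KW Cw ε : ℝ)
    (h1 : |W - W₀| ≤ KW * ε^3) (h2 : |W| ≤ Cw * ε) (h3 : |W| ≤ 1) (h4 : |W₀| ≤ 1) :
    |Real.exp W - (1 + W₀ + W₀^2/2)| ≤ 3*(Cw*ε)^3 + 2*(KW*ε^3) := by
  have he := exp_taylor2 W h3
  have hW3 : |W|^3 ≤ (Cw*ε)^3 := pow_le_pow_left₀ (abs_nonneg _) h2 3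
  have hrw : Real.exp W - (1 + W₀ + W₀^2/2)
      = (Real.exp W - 1 - W - W^2/2) + (W - W₀) + (W - W₀)*(W + W₀)/2 := by ring
  rw [hrw]
  have hsum : |W + W₀| ≤ 2 := by
    calc |W + W₀| ≤ |W| + |W₀| := abs_add_le _ _
      _ ≤ 2 := by linarith
  calc |(Real.exp W - 1 - W - W^2/2) + (W - W₀) + (W - W₀)*(W + W₀)/2|
      ≤ |Real.exp W - 1 - W - W^2/2| + |W - W₀| + |(W - W₀)*(W + W₀)/2| := abs_add_three _ _ _
    _ ≤ 3*(Cw*ε)^3 + KW*ε^3 + (KW*ε^3) := by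
        refine add_le_add (add_le_add ?_ h1) ?_
        · calc |Real.exp W - 1 - W - W^2/2| ≤ 3*|W|^3 := he
            _ ≤ 3*(Cw*ε)^3 := by linarith
        · rw [abs_div, abs_mul]
          have hm : |W - W₀| * |W + W₀| ≤ (KW*ε^3) * 2 :=
            mul_le_mul h1 hsum (abs_nonneg _) (le_trans (abs_nonneg _) h1)
          calc |W - W₀| * |W + W₀| / |(2:ℝ)| = |W - W₀| * |W + W₀| / 2 := by norm_num
            _ ≤ (KW*ε^3) * 2 / 2 := by linarith
            _ = KW*ε^3 := by ring
    _ = 3*(Cw*ε)^3 + 2*(KW*ε^3) := by ring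

set_option maxHeartbeats 8000000 in
private lemma key_est (t x : ℝ) (ht : 0 < t) :
    ∃ C : ℝ, 0 < C ∧ ∃ ε₀ : ℝ, 0 < ε₀ ∧ ε₀ ≤ 1 ∧ ∀ ε : ℝ, 0 < ε → ε ≤ ε₀ →
      |t*x*ε| ≤ 1/2 ∧
      |(1 + t*x*ε) ^ (1/t - 1) * Real.exp (x + (1 - (1 + t*x*ε) ^ (2/t)) / (2*ε)) -
        (1 + x*ε*(1 - t + (t-2)/2*x) +
          x^2*ε^2*((1-t)*(1-2*t)/2 + 5*(1-t)*(t-2)/6*x + (t-2)^2/8*x^2))|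
        ≤ C * ε^3 := by
  obtain ⟨Kp, hKp, hKpB⟩ := rpow_taylor3 (2/t)
  obtain ⟨Kq, hKq, hKqB⟩ := rpow_taylor3 (1/t - 1)
  obtain ⟨a, ha⟩ : ∃ y : ℝ, y = |t*x| := ⟨_, rfl⟩
  have ha0 : 0 ≤ a := by rw [ha]; positivity
  obtain ⟨e₁, he₁⟩ : ∃ y : ℝ, y = (t-2)/2*x^2 := ⟨_, rfl⟩
  obtain ⟨e₂, he₂⟩ : ∃ y : ℝ, y = (1-t)*(t-2)/3*x^3 := ⟨_, rfl⟩
  obtain ⟨KW, hKW⟩ : ∃ y : ℝ, y = Kp*(a+1)^4/2 := ⟨_, rfl⟩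
  have hKW0 : 0 ≤ KW := by rw [hKW]; exact div_nonneg (mul_nonneg hKp (by positivity)) (by norm_num)
  obtain ⟨Cw, hCw⟩ : ∃ y : ℝ, y = |e₁| + |e₂| + KW := ⟨_, rfl⟩
  have hCw0 : 0 ≤ Cw := by rw [hCw]; exact add_nonneg (add_nonneg (abs_nonneg _) (abs_nonneg _)) hKW0
  obtain ⟨m3, hm3⟩ : ∃ y : ℝ, y = |(1-t)*(1-2*t)*(1-3*t)/6*x^3| := ⟨_, rfl⟩
  obtain ⟨KQ, hKQ⟩ : ∃ y : ℝ, y = Kq*(a+1)^4 + m3 := ⟨_, rfl⟩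
  obtain ⟨MQ0, hMQ0⟩ : ∃ y : ℝ, y = 1 + |(1-t)*x| + |(1-t)*(1-2*t)/2*x^2| := ⟨_, rfl⟩
  obtain ⟨k0, hk0⟩ : ∃ y : ℝ, y = (-7/6)*x^4 + (7/6)*x^5 + (41/12)*t^1*x^4 + (-7/3)*t^1*x^5 + (-37/12)*t^2*x^4 + (35/24)*t^2*x^5 + (5/6)*t^3*x^4 + (-7/24)*t^3*x^5 := ⟨_, rfl⟩
  obtain ⟨k1, hk1⟩ : ∃ y : ℝ, y = (-1/3)*x^5 + (41/36)*x^6 + (3/2)*t^1*x^5 + (-11/3)*t^1*x^6 + (-7/3)*t^2*x^5 + (605/144)*t^2*x^6 + (3/2)*t^3*x^5 + (-97/48)*t^3*x^6 + (-1/3)*t^4*x^5 + (25/72)*t^4*x^6 := ⟨_, rfl⟩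
  obtain ⟨k2, hk2⟩ : ∃ y : ℝ, y = (5/9)*x^7 + (-23/9)*t^1*x^7 + (161/36)*t^2*x^7 + (-67/18)*t^3*x^7 + (53/36)*t^4*x^7 + (-2/9)*t^5*x^7 := ⟨_, rfl⟩
  obtain ⟨k3, hk3⟩ : ∃ y : ℝ, y = (1/9)*x^8 + (-2/3)*t^1*x^8 + (19/12)*t^2*x^8 + (-23/12)*t^3*x^8 + (5/4)*t^4*x^8 + (-5/12)*t^5*x^8 + (1/18)*t^6*x^8 := ⟨_, rfl⟩
  obtain ⟨MP, hMP⟩ : ∃ y : ℝ, y = |k0| + |k1| + |k2| + |k3| := ⟨_, rfl⟩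
  have hMP0 : 0 ≤ MP := by rw [hMP]; positivity
  have hKQ0 : 0 ≤ KQ := by rw [hKQ, hm3]; exact add_nonneg (mul_nonneg hKq (by positivity)) (abs_nonneg _)
  have hMQ00 : 0 ≤ MQ0 := by rw [hMQ0]; positivity
  have hC0 : 0 < 3*KQ + MQ0*(3*Cw^3 + 2*KW) + MP + 1 := by
    have h3 : (0:ℝ) ≤ 3*Cw^3 + 2*KW := by
      have := pow_nonneg hCw0 3
      linarith
    have h4 := mul_nonneg hMQ00 h3
    linarith
  have ha1 : 0 < a + 1 := by rw [ha]; positivity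
  have hCw1 : 0 < Cw + 1 := by linarith
  refine ⟨3*KQ + MQ0*(3*Cw^3 + 2*KW) + MP + 1, hC0,
    min 1 (min (1/(2*(a+1))) (1/(Cw+1))), by positivity, min_le_left _ _, ?_⟩
  intro ε hε hεle
  have hε1 : ε ≤ 1 := le_trans hεle (min_le_left _ _)
  have hεa : ε ≤ 1/(2*(a+1)) := le_trans hεle (le_trans (min_le_right _ _) (min_le_left _ _))
  have hεc : ε ≤ 1/(Cw+1) := le_trans hεle (le_trans (min_le_right _ _) (min_le_right _ _))
  have hε2 : ε^2 ≤ ε := by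
    simpa using pow_le_pow_of_le_one hε.le hε1 (by norm_num : 1 ≤ 2)
  have hε3 : ε^3 ≤ ε := by
    simpa using pow_le_pow_of_le_one hε.le hε1 (by norm_num : 1 ≤ 3)
  have haε : a * ε ≤ 1/2 := by
    have h1 : a * ε ≤ a * (1/(2*(a+1))) := mul_le_mul_of_nonneg_left hεa ha0
    have h2 : a * (1/(2*(a+1))) ≤ 1/2 := by
      rw [mul_one_div, div_le_div_iff₀ (by linarith : (0:ℝ) < 2*(a+1)) (by norm_num : (0:ℝ) < 2)]
      linarith
    exact le_trans h1 h2
  have hCwε : Cw * ε ≤ 1 := by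
    have h1 : Cw * ε ≤ Cw * (1/(Cw+1)) := mul_le_mul_of_nonneg_left hεc hCw0
    have h2 : Cw * (1/(Cw+1)) ≤ 1 := by
      rw [mul_one_div, div_le_one hCw1]
      linarith
    exact le_trans h1 h2
  set v : ℝ := t*x*ε with hv
  clear_value v
  have hvabs : |v| = a * ε := by rw [hv, ha, abs_mul, abs_of_pos hε]
  have hv12 : |v| ≤ 1/2 := by rw [hvabs]; exact haε
  refine ⟨hv12, ?_⟩
  have ht0 : t ≠ 0 := ne_of_gt ht
  have hε0 : ε ≠ 0 := ne_of_gt hε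
  set p : ℝ := 2/t with hp
  clear_value p
  set W : ℝ := x + (1 - (1+v)^p)/(2*ε) with hW
  clear_value W
  set W₀ : ℝ := e₁*ε + e₂*ε^2 with hW₀
  clear_value W₀
  have hRbound := hKpB v hv12
  have hWid : W - W₀ = -((1+v)^p - 1 - p*v - p*(p-1)/2*v^2 - p*(p-1)*(p-2)/6*v^3)/(2*ε) := by
    rw [hW, hW₀, hv, hp, he₁, he₂]
    field_simp
    ring
  have hWmW0 : |W - W₀| ≤ KW * ε^3 := by
    rw [hWid, abs_div, abs_neg]
    rw [abs_of_pos (by linarith : (0:ℝ) < 2*ε)]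
    rw [div_le_iff₀ (by linarith : (0:ℝ) < 2*ε)]
    calc |(1+v)^p - 1 - p*v - p*(p-1)/2*v^2 - p*(p-1)*(p-2)/6*v^3|
        ≤ Kp * |v|^4 := hRbound
      _ = Kp * (a*ε)^4 := by rw [hvabs]
      _ ≤ Kp * ((a+1)*ε)^4 := by
          have h4 : (a*ε)^4 ≤ ((a+1)*ε)^4 := by
            apply pow_le_pow_left₀ (by positivity)
            exact mul_le_mul_of_nonneg_right (by linarith) hε.le
          exact mul_le_mul_of_nonneg_left h4 hKp
      _ = KW * ε^3 * (2*ε) := by rw [hKW]; ring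
  have hW₀b : |W₀| ≤ (|e₁| + |e₂|) * ε := by
    rw [hW₀]
    calc |e₁*ε + e₂*ε^2| ≤ |e₁*ε| + |e₂*ε^2| := abs_add_le _ _
      _ = |e₁| * ε + |e₂| * ε^2 := by
          rw [abs_mul, abs_mul, abs_pow, abs_of_pos hε]
      _ ≤ |e₁| * ε + |e₂| * ε := by
          have := mul_le_mul_of_nonneg_left hε2 (abs_nonneg e₂)
          linarith
      _ = (|e₁| + |e₂|) * ε := by ring
  have hWb : |W| ≤ Cw * ε := by
    have htri : |W| ≤ |W₀| + |W - W₀| := by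
      calc |W| = |W₀ + (W - W₀)| := by ring_nf
        _ ≤ |W₀| + |W - W₀| := abs_add_le _ _
    have h3 : KW * ε^3 ≤ KW * ε := mul_le_mul_of_nonneg_left hε3 hKW0
    calc |W| ≤ (|e₁| + |e₂|) * ε + KW * ε^3 := by linarith
      _ ≤ (|e₁| + |e₂|) * ε + KW * ε := by linarith
      _ = Cw * ε := by rw [hCw]; ring
  have hW1 : |W| ≤ 1 := le_trans hWb hCwε
  have hW₀1 : |W₀| ≤ 1 := by
    have h1 : (|e₁| + |e₂|) * ε ≤ Cw * ε := by
      apply mul_le_mul_of_nonneg_right _ hε.le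
      rw [hCw]; linarith
    linarith
  set q : ℝ := 1/t - 1 with hq
  clear_value q
  set Q : ℝ := (1+v)^q with hQ
  clear_value Q
  set Q₀ : ℝ := 1 + (1-t)*x*ε + (1-t)*(1-2*t)/2*x^2*ε^2 with hQ₀
  clear_value Q₀
  have hQbound := hKqB v hv12
  have hQid : 1 + q*v + q*(q-1)/2*v^2 + q*(q-1)*(q-2)/6*v^3
      = Q₀ + (1-t)*(1-2*t)*(1-3*t)/6*x^3*ε^3 := by
    rw [hQ₀, hq, hv]
    field_simp
    ring
  have hQmQ0 : |Q - Q₀| ≤ KQ * ε^3 := by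
    have h1 : |Q - (Q₀ + (1-t)*(1-2*t)*(1-3*t)/6*x^3*ε^3)| ≤ Kq * |v|^4 := by
      rw [← hQid]
      have hrw2 : Q - (1 + q*v + q*(q-1)/2*v^2 + q*(q-1)*(q-2)/6*v^3)
          = (1+v)^q - 1 - q*v - q*(q-1)/2*v^2 - q*(q-1)*(q-2)/6*v^3 := by rw [hQ]; ring
      rw [hrw2]
      exact hQbound
    have h2 : |(1-t)*(1-2*t)*(1-3*t)/6*x^3*ε^3| = m3 * ε^3 := by
      rw [hm3, abs_mul, abs_pow, abs_of_pos hε]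
    have hv4 : Kq * |v|^4 ≤ Kq * ((a+1)^4 * ε^3) := by
      apply mul_le_mul_of_nonneg_left _ hKq
      rw [hvabs]
      calc (a*ε)^4 ≤ ((a+1)*ε)^4 := by
            apply pow_le_pow_left₀ (by positivity)
            exact mul_le_mul_of_nonneg_right (by linarith) hε.le
        _ = (a+1)^4 * (ε * ε^3) := by ring
        _ ≤ (a+1)^4 * (1 * ε^3) := by
            have h5 : ε * ε^3 ≤ 1 * ε^3 := mul_le_mul_of_nonneg_right hε1 (by positivity)
            exact mul_le_mul_of_nonneg_left h5 (by positivity)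
        _ = (a+1)^4 * ε^3 := by ring
    calc |Q - Q₀| ≤ |Q - (Q₀ + (1-t)*(1-2*t)*(1-3*t)/6*x^3*ε^3)|
          + |(1-t)*(1-2*t)*(1-3*t)/6*x^3*ε^3| := by
            have hsp : Q - Q₀ = (Q - (Q₀ + (1-t)*(1-2*t)*(1-3*t)/6*x^3*ε^3))
              + (1-t)*(1-2*t)*(1-3*t)/6*x^3*ε^3 := by ring
            rw [hsp]
            exact abs_add_le _ _
      _ ≤ Kq * ((a+1)^4 * ε^3) + m3 * ε^3 := add_le_add (le_trans h1 hv4) (le_of_eq h2)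
      _ = KQ * ε^3 := by rw [hKQ]; ring
  have hQ₀b : |Q₀| ≤ MQ0 := by
    rw [hQ₀, hMQ0]
    calc |1 + (1-t)*x*ε + (1-t)*(1-2*t)/2*x^2*ε^2|
        ≤ |(1:ℝ)| + |(1-t)*x*ε| + |(1-t)*(1-2*t)/2*x^2*ε^2| := abs_add_three _ _ _
      _ ≤ 1 + |(1-t)*x| + |(1-t)*(1-2*t)/2*x^2| := by
          have b1 : |(1-t)*x*ε| = |(1-t)*x| * ε := by rw [abs_mul, abs_of_pos hε]
          have b2 : |(1-t)*(1-2*t)/2*x^2*ε^2| = |(1-t)*(1-2*t)/2*x^2| * ε^2 := by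
            rw [abs_mul, abs_pow, abs_of_pos hε]
          have c1 : |(1-t)*x| * ε ≤ |(1-t)*x| :=
            mul_le_of_le_one_right (abs_nonneg _) hε1
          have c2 : |(1-t)*(1-2*t)/2*x^2| * ε^2 ≤ |(1-t)*(1-2*t)/2*x^2| :=
            mul_le_of_le_one_right (abs_nonneg _) (le_trans hε2 hε1)
          rw [b1, b2]
          simp only [abs_one]
          linarith
  set X : ℝ := Real.exp W with hX
  clear_value X
  set X₀ : ℝ := 1 + W₀ + W₀^2/2 with hX₀
  clear_value X₀
  have hXb : |X| ≤ 3 := by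
    rw [hX, abs_of_pos (Real.exp_pos _)]
    have hWle : W ≤ 1 := le_trans (le_abs_self _) hW1
    calc Real.exp W ≤ Real.exp 1 := Real.exp_le_exp.2 hWle
      _ ≤ 3 := by linarith [Real.exp_one_lt_d9.le]
  have hXX₀ : |X - X₀| ≤ (3*Cw^3 + 2*KW) * ε^3 := by
    have hEP := expPart W W₀ KW Cw ε hWmW0 hWb hW1 hW₀1
    rw [hX, hX₀]
    calc |Real.exp W - (1 + W₀ + W₀^2/2)| ≤ 3*(Cw*ε)^3 + 2*(KW*ε^3) := hEP
      _ = (3*Cw^3 + 2*KW) * ε^3 := by ring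
  set T : ℝ := 1 + x*ε*(1 - t + (t-2)/2*x) +
      x^2*ε^2*((1-t)*(1-2*t)/2 + 5*(1-t)*(t-2)/6*x + (t-2)^2/8*x^2) with hT
  have hQ₀X₀ : |Q₀*X₀ - T| ≤ MP * ε^3 := by
    have hid : Q₀*X₀ - T = ε^3 * (k0 + ε*(k1 + ε*(k2 + ε*k3))) := by
      rw [hQ₀, hX₀, hW₀, he₁, he₂, hT, hk0, hk1, hk2, hk3]
      ring
    rw [hid, abs_mul, abs_pow, abs_of_pos hε]
    have hpt := polyTail k0 k1 k2 k3 ε hε.le hε1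
    calc ε^3 * |k0 + ε*(k1 + ε*(k2 + ε*k3))| ≤ ε^3 * MP := by
          apply mul_le_mul_of_nonneg_left _ (by positivity)
          rw [hMP]; exact hpt
      _ = MP * ε^3 := by ring
  have final := combine Q Q₀ X X₀ T KQ MQ0 (3*Cw^3 + 2*KW) MP ε hQmQ0 hXb hQ₀b hXX₀ hQ₀X₀
  calc |Q*X - T| ≤ (3*KQ + MQ0*(3*Cw^3 + 2*KW) + MP) * ε^3 := final
    _ ≤ (3*KQ + MQ0*(3*Cw^3 + 2*KW) + MP + 1) * ε^3 :=
      mul_le_mul_of_nonneg_right (by linarith) (by positivity)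

/-- Lemma 3.3, `t ≠ 2`: With `b_n` the unique positive solution of
`2π b_n² exp(b_n²) = n²`, `c_n = t b_n^{t−2}` and `d_n = b_n^t` (for `t > 0`, `t ≠ 2`):
`n (d/dx) Φ((c_n x + d_n)^{1/t}) = e^{−x}(1 + x b_n^{−2}(1 − t + ((t−2)/2)x)
  + x² b_n^{−4}((1−t)(1−2t)/2 + (5(1−t)(t−2)/6)x + ((t−2)²/8)x²) + O(b_n^{−6}))`,
the derivative being `t⁻¹ n c_n (c_n x + d_n)^{1/t − 1} φ((c_n x + d_n)^{1/t})`. -/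
theorem powered_extremes_cdf_deriv_expansion_t_ne_two
    (b : ℕ → ℝ)
    (hb : ∀ n : ℕ, 1 ≤ n → 0 < b n ∧
      2 * Real.pi * (b n) ^ 2 * Real.exp ((b n) ^ 2) = (n : ℝ) ^ 2)
    (t : ℝ) (ht : 0 < t) (ht2 : t ≠ 2) (x : ℝ)
    (c d : ℕ → ℝ)
    (hc : ∀ n : ℕ, c n = t * b n ^ (t - 2))
    (hd : ∀ n : ℕ, d n = b n ^ t) :
    ∃ C > (0 : ℝ), ∃ N : ℕ, ∀ n : ℕ, N ≤ n →
      0 < c n * x + d n ∧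
      deriv (fun y : ℝ => stdNormalCDF ((c n * y + d n) ^ (1 / t))) x =
        t⁻¹ * c n * (c n * x + d n) ^ (1 / t - 1) *
          stdNormalPDF ((c n * x + d n) ^ (1 / t)) ∧
      |(n : ℝ) * Real.exp x *
          deriv (fun y : ℝ => stdNormalCDF ((c n * y + d n) ^ (1 / t))) x -
        (1 + x / (b n) ^ 2 * (1 - t + (t - 2) / 2 * x) +
          x ^ 2 / (b n) ^ 4 *
            ((1 - t) * (1 - 2 * t) / 2 + 5 * (1 - t) * (t - 2) / 6 * x +
              (t - 2) ^ 2 / 8 * x ^ 2))|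
      ≤ C / (b n) ^ 6 := by
  have ht0 : t ≠ 0 := ne_of_gt ht
  obtain ⟨C, hC, ε₀, hε₀, hε₀1, hkey⟩ := key_est t x ht
  obtain ⟨N, hN1, hNb⟩ := b_tendsto b hb (1 + 1/Real.sqrt ε₀)
    (by positivity)
  refine ⟨C, hC, N, ?_⟩
  intro n hn
  have hn1 : 1 ≤ n := le_trans hN1 hn
  obtain ⟨hB, hBeq⟩ := hb n hn1
  set B : ℝ := b n with hBdef
  have hB0 : B ≠ 0 := ne_of_gt hB
  have hBM : 1 + 1/Real.sqrt ε₀ ≤ B := hNb n hn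
  set ε : ℝ := (B^2)⁻¹ with hεdef
  have hε : 0 < ε := by positivity
  have hεε₀ : ε ≤ ε₀ := by
    have hs : 0 < Real.sqrt ε₀ := Real.sqrt_pos.2 hε₀
    have h1 : 1/Real.sqrt ε₀ ≤ B := by
      have : (0:ℝ) < 1 := one_pos
      linarith
    have h2 : (1/Real.sqrt ε₀)^2 ≤ B^2 := by
      apply pow_le_pow_left₀ (by positivity) h1
    have h3 : (1/Real.sqrt ε₀)^2 = 1/ε₀ := by
      rw [div_pow, one_pow, Real.sq_sqrt hε₀.le]
    rw [hεdef]
    rw [inv_le_comm₀ (by positivity) hε₀]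
    rw [h3] at h2
    calc ε₀⁻¹ = 1/ε₀ := (one_div ε₀).symm
      _ ≤ B^2 := h2
  obtain ⟨hv12, hbound⟩ := hkey ε hε hεε₀
  have hone : (0:ℝ) < 1 + t*x*ε := by
    rcases abs_le.1 hv12 with ⟨h1, _⟩
    linarith
  -- c n * x + d n = B^t * (1 + t*x*ε)
  have hrpow2 : B ^ ((2:ℕ):ℝ) = B^2 := Real.rpow_natCast B 2
  have hcd : c n * x + d n = B^t * (1 + t*x*ε) := by
    rw [hc n, hd n, ← hBdef]
    have hsub : B^(t-2) = B^t / B^2 := by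
      rw [Real.rpow_sub hB]
      norm_num [hrpow2]
    rw [hsub, hεdef]
    field_simp
    ring
  have hcdpos : 0 < c n * x + d n := by
    rw [hcd]
    exact mul_pos (Real.rpow_pos_of_pos hB t) hone
  -- derivative formula
  have hinner : HasDerivAt (fun y : ℝ => (c n * y + d n) ^ (1/t))
      (1/t * (c n * x + d n)^(1/t - 1) * c n) x := by
    have h1 : HasDerivAt (fun y : ℝ => c n * y + d n) (c n) x := by
      simpa using ((hasDerivAt_id x).const_mul (c n)).add_const (d n)
    have h2 := Real.hasDerivAt_rpow_const (x := c n * x + d n) (p := 1/t)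
      (Or.inl (ne_of_gt hcdpos))
    exact h2.comp x h1
  have houter := hasDerivAt_stdNormalCDF ((c n * x + d n) ^ (1/t))
  have hcomp : HasDerivAt (fun y : ℝ => stdNormalCDF ((c n * y + d n) ^ (1/t)))
      (stdNormalPDF ((c n * x + d n) ^ (1/t)) * (1/t * (c n * x + d n)^(1/t - 1) * c n)) x := by
    exact houter.comp x hinner
  have hderiv : deriv (fun y : ℝ => stdNormalCDF ((c n * y + d n) ^ (1/t))) x
      = t⁻¹ * c n * (c n * x + d n) ^ (1/t - 1) * stdNormalPDF ((c n * x + d n) ^ (1/t)) := by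
    rw [hcomp.deriv]
    rw [inv_eq_one_div]
    ring
  refine ⟨hcdpos, hderiv, ?_⟩
  -- value computation
  have hn' : (n:ℝ) = Real.sqrt (2*Real.pi) * B * Real.exp (B^2/2) := by
    have h2 : (Real.sqrt (2*Real.pi) * B * Real.exp (B^2/2))^2
        = 2*Real.pi*B^2*Real.exp (B^2) := by
      rw [mul_pow, mul_pow, Real.sq_sqrt (by positivity : (0:ℝ) ≤ 2*Real.pi)]
      rw [pow_two (Real.exp (B^2/2)), ← Real.exp_add]
      ring_nf
    calc (n:ℝ) = Real.sqrt ((n:ℝ)^2) := (Real.sqrt_sq (Nat.cast_nonneg n)).symm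
      _ = Real.sqrt ((Real.sqrt (2*Real.pi) * B * Real.exp (B^2/2))^2) := by
          rw [← hBeq, ← h2]
      _ = Real.sqrt (2*Real.pi) * B * Real.exp (B^2/2) := Real.sqrt_sq (by positivity)
  have hs2 : ((c n * x + d n)^(1/t))^2 = B^2 * (1+t*x*ε)^(2/t) := by
    rw [hcd]
    rw [Real.mul_rpow (Real.rpow_nonneg hB.le t) hone.le]
    rw [← Real.rpow_mul hB.le]
    rw [show t*(1/t) = 1 from by field_simp]
    rw [Real.rpow_one, mul_pow]
    congr 1
    rw [← Real.rpow_natCast ((1+t*x*ε)^(1/t)) 2, ← Real.rpow_mul hone.le]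
    congr 1
    push_cast
    ring
  have hcd1 : (c n * x + d n)^(1/t - 1) = B^(t*(1/t-1)) * (1+t*x*ε)^(1/t-1) := by
    rw [hcd, Real.mul_rpow (Real.rpow_nonneg hB.le t) hone.le, ← Real.rpow_mul hB.le]
  have htc : t⁻¹ * c n = B^(t-2) := by
    rw [hc n, ← hBdef]
    field_simp
  have hexps : Real.exp (B^2/2) * Real.exp x * Real.exp (-(B^2*(1+t*x*ε)^(2/t))/2)
      = Real.exp (x + (1 - (1+t*x*ε)^(2/t))/(2*ε)) := by
    rw [← Real.exp_add, ← Real.exp_add]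
    congr 1
    rw [hεdef]
    field_simp
    ring
  have hBprod : B * (B^(t-2) * B^(t*(1/t-1))) = 1 := by
    calc B * (B^(t-2)*B^(t*(1/t-1)))
        = B^(1:ℝ) * (B^(t-2)*B^(t*(1/t-1))) := by rw [Real.rpow_one]
      _ = B^(1:ℝ) * B^((t-2) + t*(1/t-1)) := by rw [Real.rpow_add hB]
      _ = B^((1:ℝ) + ((t-2) + t*(1/t-1))) := by rw [← Real.rpow_add hB]
      _ = B^(0:ℝ) := by
          rw [show (1:ℝ) + ((t-2) + t*(1/t-1)) = 0 from by field_simp; ring]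
      _ = 1 := Real.rpow_zero B
  have hpdf : stdNormalPDF ((c n * x + d n)^(1/t))
      = Real.exp (-(B^2*(1+t*x*ε)^(2/t))/2) / Real.sqrt (2*Real.pi) := by
    simp only [stdNormalPDF]
    rw [hs2]
  have hS : Real.sqrt (2*Real.pi) ≠ 0 := by positivity
  have hval : (n:ℝ) * Real.exp x *
      (t⁻¹ * c n * (c n * x + d n) ^ (1/t - 1) * stdNormalPDF ((c n * x + d n) ^ (1/t)))
      = (1 + t*x*ε) ^ (1/t - 1) * Real.exp (x + (1 - (1 + t*x*ε) ^ (2/t)) / (2*ε)) := by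
    rw [hn', htc, hcd1, hpdf]
    calc Real.sqrt (2*Real.pi) * B * Real.exp (B^2/2) * Real.exp x *
          (B^(t-2) * (B^(t*(1/t-1)) * (1+t*x*ε)^(1/t-1)) *
            (Real.exp (-(B^2*(1+t*x*ε)^(2/t))/2) / Real.sqrt (2*Real.pi)))
        = (B * (B^(t-2) * B^(t*(1/t-1)))) *
            (Real.sqrt (2*Real.pi) * (Real.sqrt (2*Real.pi))⁻¹) *
            ((1+t*x*ε)^(1/t-1)) *
            (Real.exp (B^2/2) * Real.exp x * Real.exp (-(B^2*(1+t*x*ε)^(2/t))/2)) := by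
          ring
      _ = 1 * 1 * ((1+t*x*ε)^(1/t-1)) *
            Real.exp (x + (1 - (1+t*x*ε)^(2/t))/(2*ε)) := by
          rw [hBprod, mul_inv_cancel₀ hS, hexps]
      _ = (1 + t*x*ε) ^ (1/t - 1) * Real.exp (x + (1 - (1 + t*x*ε) ^ (2/t)) / (2*ε)) := by
          ring
  have hT : (1 + x / B^2 * (1 - t + (t - 2) / 2 * x) +
        x ^ 2 / B^4 * ((1 - t) * (1 - 2 * t) / 2 + 5 * (1 - t) * (t - 2) / 6 * x +
          (t - 2) ^ 2 / 8 * x ^ 2))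
      = 1 + x*ε*(1 - t + (t-2)/2*x) +
        x^2*ε^2*((1-t)*(1-2*t)/2 + 5*(1-t)*(t-2)/6*x + (t-2)^2/8*x^2) := by
    rw [hεdef]
    field_simp
  have hC6 : C * ε^3 = C / B^6 := by
    rw [hεdef]
    rw [show ((B^2)⁻¹)^3 = (B^6)⁻¹ from by rw [inv_pow, ← pow_mul]]
    rw [div_eq_mul_inv]
  calc |(n : ℝ) * Real.exp x *
          deriv (fun y : ℝ => stdNormalCDF ((c n * y + d n) ^ (1 / t))) x -
        (1 + x / B ^ 2 * (1 - t + (t - 2) / 2 * x) +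
          x ^ 2 / B ^ 4 *
            ((1 - t) * (1 - 2 * t) / 2 + 5 * (1 - t) * (t - 2) / 6 * x +
              (t - 2) ^ 2 / 8 * x ^ 2))|
      = |(1 + t*x*ε) ^ (1/t - 1) * Real.exp (x + (1 - (1 + t*x*ε) ^ (2/t)) / (2*ε)) -
          (1 + x*ε*(1 - t + (t-2)/2*x) +
            x^2*ε^2*((1-t)*(1-2*t)/2 + 5*(1-t)*(t-2)/6*x + (t-2)^2/8*x^2))| := by
        rw [hderiv, hval, hT]
    _ ≤ C * ε^3 := hbound
    _ = C / B^6 := hC6
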